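/- arXiv:2101.09178 — 2 statements merged into one kernel-verified Lean document; each statement's English description precedes it below -/
import Mathlib

section
/- For any discrete random variable with n outcomes and probability vector p, and any outcome i, the Shannon entropy H(p) is at most h_b(p_i) + (1 - p_i) * log(n - 1), where h_b(q) = -q log q - (1-q) log(1-q) is the binary entropy function. -/
noncomputable def binEnt (q : ℝ) : ℝ := -q * Real.log q - (1 - q) * Real.log (1 - q)

/-- Pointwise Gibbs-type bound: for `0 ≤ x` and `0 < c`,
`-x log x ≤ -x log c + (c - x)`. -/
lemma neg_mul_log_le (x c : ℝ) (hx : 0 ≤ x) (hc : 0 < c) :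
    -(x * Real.log x) ≤ -(x * Real.log c) + (c - x) := by
  rcases eq_or_lt_of_le hx with h | h
  · simp [← h, hc.le]
  · have hlog : Real.log (c / x) ≤ c / x - 1 :=
      Real.log_le_sub_one_of_pos (div_pos hc h)
    have hmul : x * Real.log (c / x) ≤ x * (c / x - 1) :=
      mul_le_mul_of_nonneg_left hlog hx
    rw [Real.log_div hc.ne' h.ne'] at hmul
    have hxc : x * (c / x - 1) = c - x := by field_simp
    nlinarith [hmul]

/-- Entropy upper bound: H(p) ≤ h_b(p_i) + (1 - p_i) log (n-1). -/
theorem stmt_0 (n : ℕ) (hn : 2 ≤ n) (p : Fin n → ℝ)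
    (hp0 : ∀ j, 0 ≤ p j) (hp1 : ∑ j, p j = 1) (i : Fin n) :
    (-∑ j, p j * Real.log (p j)) ≤ binEnt (p i) + (1 - p i) * Real.log (n - 1) := by
  classical
  set s := 1 - p i with hs
  have hsum_erase : ∑ j ∈ Finset.univ.erase i, p j = s := by
    have := Finset.add_sum_erase Finset.univ p (Finset.mem_univ i)
    rw [hp1] at this
    linarith
  have hsplit : ∑ j, p j * Real.log (p j)
      = p i * Real.log (p i) + ∑ j ∈ Finset.univ.erase i, p j * Real.log (p j) :=
    (Finset.add_sum_erase Finset.univ (fun j => p j * Real.log (p j))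
      (Finset.mem_univ i)).symm
  have hcard : (Finset.univ.erase i).card = n - 1 := by
    simp [Finset.card_erase_of_mem]
  have hn1 : (1 : ℝ) ≤ (n : ℝ) - 1 := by
    have : (2 : ℝ) ≤ (n : ℝ) := by exact_mod_cast hn
    linarith
  have hn1pos : (0 : ℝ) < (n : ℝ) - 1 := by linarith
  have hcardR : ((Finset.univ.erase i).card : ℝ) = (n : ℝ) - 1 := by
    rw [hcard]
    have : (1 : ℕ) ≤ n := by omega
    push_cast [Nat.cast_sub this]
    ring
  -- key : ∑_{j≠i} -p_j log p_j ≤ -s log s + s log (n-1)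
  have key : -∑ j ∈ Finset.univ.erase i, p j * Real.log (p j)
      ≤ -(s * Real.log s) + s * Real.log ((n : ℝ) - 1) := by
    have hs0 : 0 ≤ s := by
      rw [← hsum_erase]
      exact Finset.sum_nonneg fun j _ => hp0 j
    rcases eq_or_lt_of_le hs0 with h0 | hspos
    · -- s = 0, so each p j = 0 for j ≠ i
      have hzero : ∀ j ∈ Finset.univ.erase i, p j = 0 := by
        intro j hj
        have := (Finset.sum_eq_zero_iff_of_nonneg (fun j _ => hp0 j)).mp
          (by rw [hsum_erase, ← h0]) j hj
        exact this
      rw [Finset.sum_congr rfl fun j hj => by rw [hzero j hj]]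
      simp [← h0]
    · set c := s / ((n : ℝ) - 1) with hc
      have hcpos : 0 < c := div_pos hspos hn1pos
      have hterm : ∀ j ∈ Finset.univ.erase i,
          -(p j * Real.log (p j)) ≤ -(p j * Real.log c) + (c - p j) :=
        fun j _ => neg_mul_log_le (p j) c (hp0 j) hcpos
      calc -∑ j ∈ Finset.univ.erase i, p j * Real.log (p j)
          = ∑ j ∈ Finset.univ.erase i, -(p j * Real.log (p j)) := by
            rw [Finset.sum_neg_distrib]
        _ ≤ ∑ j ∈ Finset.univ.erase i, (-(p j * Real.log c) + (c - p j)) :=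
            Finset.sum_le_sum hterm
        _ = -(s * Real.log c) + (((n : ℝ) - 1) * c - s) := by
            rw [Finset.sum_add_distrib, Finset.sum_neg_distrib, ← Finset.sum_mul,
              hsum_erase, Finset.sum_sub_distrib, Finset.sum_const, hsum_erase,
              nsmul_eq_mul, hcardR]
        _ = -(s * Real.log c) := by
            have : ((n : ℝ) - 1) * c = s := by
              rw [hc]; field_simp
            rw [this]; ring
        _ = -(s * Real.log s) + s * Real.log ((n : ℝ) - 1) := by
            rw [hc, Real.log_div hspos.ne' hn1pos.ne']
            ring
  rw [hsplit, binEnt]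
  rw [hs] at key
  simp only [hs]
  linarith [key]
end

section
/- In the single-population infinite-α α-rank chain on 4 strategies {G1, G2, B1, B2} for the '2 Good, 2 Bad' game, with perturbation ε → 0, the stationary distribution converges to (0, 1, 0, 0), i.e., all mass concentrates on G2. -/
open Finset

/-- Transition matrix of the single-population infinite-α α-rank chain for the
'2 Good, 2 Bad' game, with perturbation ε; strategies ordered (G1, G2, B1, B2). -/
noncomputable def goodBadC (ε : ℝ) : Matrix (Fin 4) (Fin 4) ℝ :=
  !![(2 - ε)/3, (1 - ε)/3, ε/3,       ε/3;
     ε/3,       1 - ε,     ε/3,       ε/3;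
     (1 - ε)/3, (1 - ε)/3, (1 + 4*ε)/6, 1/6;
     (1 - ε)/3, (1 - ε)/3, 1/6,       (1 + 4*ε)/6]

lemma goodBad_bounds (ε a b c d : ℝ) (hε0 : 0 < ε) (hε1 : ε < 1/2)
    (ha : 0 ≤ a) (hb : 0 ≤ b) (hc : 0 ≤ c) (hd : 0 ≤ d)
    (hsum : a + b + c + d = 1)
    (h0 : a * ((2-ε)/3) + b * (ε/3) + c * ((1-ε)/3) + d * ((1-ε)/3) = a)
    (h2 : a * (ε/3) + b * (ε/3) + c * ((1+4*ε)/6) + d * (1/6) = c)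
    (h3 : a * (ε/3) + b * (ε/3) + c * (1/6) + d * ((1+4*ε)/6) = d) :
    a ≤ 2*ε ∧ c ≤ ε ∧ d ≤ ε ∧ 1 - 4*ε ≤ b := by
  have hcd : c = d := by nlinarith [sub_nonneg.2 hε1.le]
  subst hcd
  have hcε : c ≤ ε := by nlinarith
  refine ⟨by nlinarith, hcε, hcε, by nlinarith⟩

/-- Any family r(ε) of stationary distributions of the '2 Good, 2 Bad' chain converges
to (0,1,0,0) as ε → 0⁺: all mass concentrates on G2. -/
theorem stmt_15 (r : ℝ → Fin 4 → ℝ)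
    (hr : ∀ ε ∈ Set.Ioo (0:ℝ) (1/2),
      (∀ i, 0 ≤ r ε i) ∧ (∑ i, r ε i = 1) ∧
      (∀ τ, ∑ σ, r ε σ * goodBadC ε σ τ = r ε τ)) :
    Filter.Tendsto r (nhdsWithin 0 (Set.Ioi 0))
      (nhds (fun i => if i = 1 then 1 else 0)) := by
  have hmem : Set.Ioo (0:ℝ) (1/2) ∈ nhdsWithin 0 (Set.Ioi 0) :=
    Ioo_mem_nhdsGT_of_mem (by norm_num)
  rw [tendsto_pi_nhds]
  intro i
  set L : ℝ := if i = 1 then 1 else 0 with hL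
  have hbd : ∀ᶠ ε in nhdsWithin (0:ℝ) (Set.Ioi 0),
      L - 4*ε ≤ r ε i ∧ r ε i ≤ L + 4*ε := by
    filter_upwards [hmem] with ε hε
    obtain ⟨hpos, hsum, hst⟩ := hr ε hε
    have h0 := hst 0
    have h2 := hst 2
    have h3 := hst 3
    simp only [goodBadC, Fin.sum_univ_four, Matrix.cons_val_zero, Matrix.cons_val_one,
      Matrix.head_cons, Matrix.cons_val', Matrix.cons_val_fin_one, Matrix.empty_val',
      Matrix.head_fin_const, Matrix.of_apply, Matrix.cons_val_two, Matrix.tail_cons,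
      Matrix.cons_val_three] at h0 h2 h3
    rw [Fin.sum_univ_four] at hsum
    obtain ⟨ha2, hc2, hd2, hb2⟩ := goodBad_bounds ε (r ε 0) (r ε 1) (r ε 2) (r ε 3)
      hε.1 hε.2 (hpos 0) (hpos 1) (hpos 2) (hpos 3) hsum (by linarith) (by linarith)
      (by linarith)
    have hb1 : r ε 1 ≤ 1 := by
      have := hpos 0; have := hpos 2; have := hpos 3; linarith
    have hε0 := hε.1
    fin_cases i <;> simp [hL] <;>
      constructor <;> first
        | linarith [hpos 0] | linarith [hpos 2] | linarith [hpos 3] | linarith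
  have hlo : Filter.Tendsto (fun ε : ℝ => L - 4*ε) (nhdsWithin 0 (Set.Ioi 0)) (nhds L) := by
    have : Filter.Tendsto (fun ε : ℝ => L - 4*ε) (nhds 0) (nhds (L - 4*0)) := by
      exact Filter.Tendsto.sub tendsto_const_nhds (Filter.Tendsto.const_mul 4 Filter.tendsto_id)
    simpa using this.mono_left nhdsWithin_le_nhds
  have hhi : Filter.Tendsto (fun ε : ℝ => L + 4*ε) (nhdsWithin 0 (Set.Ioi 0)) (nhds L) := by
    have : Filter.Tendsto (fun ε : ℝ => L + 4*ε) (nhds 0) (nhds (L + 4*0)) := by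
      exact Filter.Tendsto.add tendsto_const_nhds (Filter.Tendsto.const_mul 4 Filter.tendsto_id)
    simpa using this.mono_left nhdsWithin_le_nhds
  exact tendsto_of_tendsto_of_tendsto_of_le_of_le' hlo hhi
    (hbd.mono fun ε h => h.1) (hbd.mono fun ε h => h.2)
end
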